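/- For every integer k ≥ 1, the polynomial P_k has degree k−1 and its leading coefficient (the coefficient of X^{k−1}) equals (−1)^{k−1}·(k−1)!. -/
import Mathlib

noncomputable section

open Polynomial

/-- The polynomials `P_k` defined by `P₁ = 1` and
`P_{k+1}(X) = (1-2k)·X·P_k(X) + (1+X²)·P_k'(X)` for `k ≥ 1`. -/
def P : ℕ → Polynomial ℝ
  | 0 => 0
  | 1 => 1
  | (k + 2) => C (1 - 2 * ((k : ℝ) + 1)) * X * P (k + 1)
      + (1 + X ^ 2) * derivative (P (k + 1))

lemma P_aux : ∀ k : ℕ, (P (k+1)).degree = (k : ℕ) ∧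
    (P (k+1)).coeff k = (-1 : ℝ) ^ k * (Nat.factorial k : ℝ) := by
  intro k
  induction k with
  | zero => simp [P]
  | succ k ih =>
    obtain ⟨hdeg, hcoeff⟩ := ih
    set Q := P (k+1) with hQdef
    set D := derivative Q with hDdef
    set c : ℝ := 1 - 2 * ((k : ℝ) + 1) with hc
    have hP2 : P (k+2) = C c * X * Q + (1 + X ^ 2) * D := rfl
    have hQ0 : Q ≠ 0 := by
      intro h; rw [h, degree_zero] at hdeg; exact (by simp : (⊥ : WithBot ℕ) ≠ (k:ℕ)) hdeg
    -- coefficient of D at k+1 is zero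
    have hD1 : D.coeff (k+1) = 0 := by
      rw [hDdef, coeff_derivative]
      have : Q.coeff (k+2) = 0 := by
        apply coeff_eq_zero_of_degree_lt
        rw [hdeg]; exact_mod_cast (by omega : k < k + 2)
      rw [this]; ring
    -- coefficient of the second summand
    have hX2D : (X ^ 2 * D).coeff (k+1) = (Q.coeff k) * k := by
      cases k with
      | zero =>
        have : D = 0 := by
          rw [hDdef]
          have : Q.natDegree = 0 := natDegree_eq_of_degree_eq_some hdeg
          rw [Polynomial.eq_C_of_natDegree_eq_zero this]
          simp
        simp [this]
      | succ j =>
        have h1 : (X ^ 2 * D).coeff (j + 1 + 1) = D.coeff j := by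
          have := coeff_X_pow_mul D 2 j
          simpa [show j + 2 = j + 1 + 1 from by ring] using this
        rw [h1, hDdef, coeff_derivative]
        push_cast; ring
    have hcoeff2 : (P (k+2)).coeff (k+1) = -((k:ℝ)+1) * ((-1:ℝ)^k * (Nat.factorial k : ℝ)) := by
      rw [hP2, coeff_add, mul_assoc, coeff_C_mul, coeff_X_mul, add_mul, one_mul, coeff_add,
        hD1, hX2D, hcoeff, hc]
      push_cast; ring
    have hne : (P (k+2)).coeff (k+1) ≠ 0 := by
      rw [hcoeff2]
      have h1 : ((k:ℝ)+1) ≠ 0 := by positivity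
      have h2 : ((-1:ℝ)^k * (Nat.factorial k : ℝ)) ≠ 0 := by
        apply mul_ne_zero
        · exact pow_ne_zero _ (by norm_num)
        · exact_mod_cast Nat.factorial_ne_zero k
      intro h
      rcases mul_eq_zero.mp h with h | h
      · exact h1 (neg_eq_zero.mp h)
      · exact h2 h
    have hub : (P (k+2)).degree ≤ ((k+1 : ℕ) : WithBot ℕ) := by
      rw [hP2]
      apply degree_add_le_of_degree_le
      · calc degree (C c * X * Q) ≤ degree (C c * X) + degree Q := degree_mul_le _ _
          _ ≤ 1 + (k : ℕ) := add_le_add (degree_C_mul_X_le c) (le_of_eq hdeg)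
          _ = ((k+1 : ℕ) : WithBot ℕ) := by
              rw [show ((k+1:ℕ) : WithBot ℕ) = ((k:ℕ) : WithBot ℕ) + 1 by exact_mod_cast rfl]
              rw [add_comm]
      · rcases Nat.eq_zero_or_pos k with hk0 | hkpos
        · have hD0 : D = 0 := by
            subst hk0
            rw [hDdef, Polynomial.eq_C_of_natDegree_eq_zero
              (natDegree_eq_of_degree_eq_some hdeg)]
            simp
          rw [hD0, mul_zero, degree_zero]; exact bot_le
        calc degree ((1 + X^2) * D) ≤ degree ((1:ℝ[X]) + X^2) + degree D := degree_mul_le _ _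
          _ ≤ 2 + (Q.natDegree - 1 : ℕ) := by
              apply add_le_add
              · apply le_of_eq; compute_degree!
              · calc degree D ≤ (D.natDegree : WithBot ℕ) := degree_le_natDegree
                  _ ≤ ((Q.natDegree - 1 : ℕ) : WithBot ℕ) := by
                      exact_mod_cast natDegree_derivative_le Q
          _ ≤ ((k+1 : ℕ) : WithBot ℕ) := by
              have hn : Q.natDegree = k := natDegree_eq_of_degree_eq_some hdeg
              rw [hn]
              rw [show (2 : WithBot ℕ) = ((2:ℕ) : WithBot ℕ) from rfl, ← Nat.cast_add,
                Nat.cast_le]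
              omega
    have hlb : ((k+1 : ℕ) : WithBot ℕ) ≤ (P (k+2)).degree := le_degree_of_ne_zero hne
    refine ⟨le_antisymm hub hlb, ?_⟩
    rw [hcoeff2, Nat.factorial_succ]
    push_cast; ring

/-- Lemma 2.1: `P_k` has degree `k-1` with leading coefficient `(-1)^{k-1}·(k-1)!`. -/
theorem P_degree_leadingCoeff (k : ℕ) (hk : 1 ≤ k) :
    (P k).degree = (k - 1 : ℕ) ∧
      (P k).coeff (k - 1) = (-1 : ℝ) ^ (k - 1) * (Nat.factorial (k - 1) : ℝ) := by
  obtain ⟨m, rfl⟩ : ∃ m, k = m + 1 := ⟨k - 1, by omega⟩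
  simpa using P_aux m
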